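/- For natural numbers s and j with 0 ≤ j ≤ s, ∑_{k=0}^{s} C(k,j)·C(s+k,k) = C(s+j,j)·C(2s+1, s+j+1). -/

import Mathlib

lemma key_step (s j m : ℕ) (hj : j ≤ m) :
    (s + j).choose j * (s + m + 1).choose (m + 1 - j) =
      (m + 1).choose j * (s + m + 1).choose (m + 1) := by
  have h1 : (s + m + 1).choose (m + 1) * (m + 1).choose j =
      (s + m + 1).choose j * (s + m + 1 - j).choose (m + 1 - j) :=
    Nat.choose_mul (by omega)
  have h2 : (s + m + 1).choose (s + j) * (s + j).choose j =
      (s + m + 1).choose j * (s + m + 1 - j).choose (s + j - j) :=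
    Nat.choose_mul (by omega)
  have h3 : (s + m + 1).choose (s + j) = (s + m + 1).choose (m + 1 - j) := by
    rw [← Nat.choose_symm (show s + j ≤ s + m + 1 by omega)]
    congr 1
    omega
  have h4 : (s + m + 1 - j).choose (s + j - j) = (s + m + 1 - j).choose (m + 1 - j) := by
    rw [← Nat.choose_symm (show m + 1 - j ≤ s + m + 1 - j by omega)]
    congr 1
    omega
  rw [h3, h4] at h2
  rw [mul_comm ((s + j).choose j), h2, ← h1, mul_comm]

lemma partial_sum (s j d : ℕ) :
    ∑ k ∈ Finset.range (j + d + 1), k.choose j * (s + k).choose k =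
      (s + j).choose j * (s + (j + d) + 1).choose d := by
  induction d with
  | zero =>
    rw [Finset.sum_range_succ, Finset.sum_eq_zero]
    · simp
    · intro k hk
      simp only [Finset.mem_range] at hk
      rw [Nat.choose_eq_zero_of_lt (by omega)]
      ring
  | succ d ih =>
    have : j + (d + 1) + 1 = (j + d + 1) + 1 := by omega
    rw [this, Finset.sum_range_succ, ih]
    have hk := key_step s j (j + d) (by omega)
    have hrw : j + d + 1 - j = d + 1 := by omega
    rw [hrw] at hk
    have hp : (s + (j + d) + 1).choose d + (s + (j + d) + 1).choose (d + 1) =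
        (s + (j + d) + 1 + 1).choose (d + 1) := (Nat.choose_succ_succ' _ _).symm
    calc (s + j).choose j * (s + (j + d) + 1).choose d +
        (j + d + 1).choose j * (s + (j + d + 1)).choose (j + d + 1)
        = (s + j).choose j * (s + (j + d) + 1).choose d +
          (j + d + 1).choose j * (s + (j + d) + 1).choose (j + d + 1) := by ring_nf
      _ = (s + j).choose j * (s + (j + d) + 1).choose d +
          (s + j).choose j * (s + (j + d) + 1).choose (d + 1) := by rw [← hk]
      _ = (s + j).choose j * ((s + (j + d) + 1).choose d +
          (s + (j + d) + 1).choose (d + 1)) := by ring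
      _ = (s + j).choose j * (s + (j + d + 1) + 1).choose (d + 1) := by
          rw [hp]; ring_nf

theorem choose_sum_identity (s j : ℕ) (hj : j ≤ s) :
    ∑ k ∈ Finset.range (s + 1), k.choose j * (s + k).choose k =
      (s + j).choose j * (2 * s + 1).choose (s + j + 1) := by
  have hd : s = j + (s - j) := by omega
  have h := partial_sum s j (s - j)
  rw [← hd] at h
  have heq : (2 * s + 1).choose (s + j + 1) = (s + s + 1).choose (s - j) := by
    rw [← Nat.choose_symm (show s + j + 1 ≤ 2 * s + 1 by omega)]
    congr 1 <;> omega
  rw [h, heq]
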